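/- arXiv:1905.02641 — 3 statements merged into one kernel-verified Lean document; each statement's English description precedes it below -/
import Mathlib

section
/- For every real a > 0 and every p ∈ (0,1), (1-p)·(1 - exp(-a)) ≥ (exp(-a) + (1-p)(1 - exp(-a)) - exp(-p·a)) / (1 - exp(-p·a)). -/
/-- For every real `a > 0` and `p ∈ (0,1)`,
`(1-p)(1-e^{-a}) ≥ (e^{-a} + (1-p)(1-e^{-a}) - e^{-pa}) / (1 - e^{-pa})`. -/
theorem stmt2 (a p : ℝ) (ha : 0 < a) (hp : p ∈ Set.Ioo (0 : ℝ) 1) :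
    (1 - p) * (1 - Real.exp (-a)) ≥
      (Real.exp (-a) + (1 - p) * (1 - Real.exp (-a)) - Real.exp (-p * a)) /
        (1 - Real.exp (-p * a)) := by
  obtain ⟨hp0, hp1⟩ := hp
  have hD : 0 < 1 - Real.exp (-p * a) := by
    have : Real.exp (-p * a) < 1 := by
      rw [Real.exp_lt_one_iff]; nlinarith
    linarith
  rw [ge_iff_le, div_le_iff₀ hD]
  -- convexity: e^{-(1-p)a} ≤ (1-p)e^{-a} + p
  have hconv := convexOn_exp.2 (Set.mem_univ (-a)) (Set.mem_univ (0 : ℝ))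
    (le_of_lt (by linarith : (0:ℝ) < 1 - p)) hp0.le (by ring)
  simp only [smul_eq_mul, mul_zero, add_zero, Real.exp_zero, mul_one] at hconv
  -- hconv : exp ((1-p) * -a) ≤ (1-p) * exp (-a) + p
  have key : Real.exp ((1 - p) * -a) + (1 - p) * (1 - Real.exp (-a)) - 1 ≤ 0 := by
    linarith
  have hsplit : Real.exp (-a) = Real.exp (-p * a) * Real.exp ((1 - p) * -a) := by
    rw [← Real.exp_add]; ring_nf
  have hpa : 0 < Real.exp (-p * a) := Real.exp_pos _
  nlinarith [mul_nonpos_of_nonneg_of_nonpos hpa.le key]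
end

section
/- Let q : ℕ → ℝ be nonnegative with ∑_{k=0}^∞ q(k) = 1, suppose the series γ := ∑_{k=0}^∞ k·q(k) converges, let g(x) := ∑_{k=0}^∞ q(k)·xᵏ, and define x₀ := 0 and x_{n+1} := g(x_n). Then for every n ∈ ℕ one has 0 ≤ x_n ≤ 1 and 1 - x_n ≤ γⁿ. -/
lemma one_sub_pow_le_aux {y : ℝ} (h0 : 0 ≤ y) (h1 : y ≤ 1) :
    ∀ k : ℕ, 1 - y ^ k ≤ (k : ℝ) * (1 - y) := by
  intro k
  induction k with
  | zero => simp
  | succ k ih =>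
    have hyk : y ^ k ≤ 1 := pow_le_one₀ h0 h1
    have hyk0 : 0 ≤ y ^ k := pow_nonneg h0 k
    have : 1 - y ^ (k + 1) = (1 - y) + y * (1 - y ^ k) := by ring
    rw [this]
    push_cast
    have h2 : y * (1 - y ^ k) ≤ (k : ℝ) * (1 - y) := by
      calc y * (1 - y ^ k) ≤ 1 * (1 - y ^ k) := by
            apply mul_le_mul_of_nonneg_right h1 (by linarith)
        _ = 1 - y ^ k := one_mul _
        _ ≤ (k : ℝ) * (1 - y) := ih
    linarith

/-- Let `q : ℕ → ℝ` be nonnegative with `∑ q(k) = 1`, suppose the mean series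
`γ := ∑ k q(k)` converges, let `g(x) := ∑ q(k) xᵏ`, and define `x₀ := 0`,
`x_{n+1} := g(x_n)`. Then for every `n`, `0 ≤ x_n ≤ 1` and `1 - x_n ≤ γⁿ`. -/
theorem stmt14 (q : ℕ → ℝ) (hq : ∀ k, 0 ≤ q k) (hsum : ∑' k : ℕ, q k = 1)
    (hmean : Summable fun k : ℕ => (k : ℝ) * q k)
    (x : ℕ → ℝ) (hx0 : x 0 = 0) (hxs : ∀ n : ℕ, x (n + 1) = ∑' k : ℕ, q k * x n ^ k) :
    ∀ n : ℕ, x n ∈ Set.Icc (0 : ℝ) 1 ∧ 1 - x n ≤ (∑' k : ℕ, (k : ℝ) * q k) ^ n := by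
  set γ := ∑' k : ℕ, (k : ℝ) * q k with hγ
  have hqsum : Summable q := by
    by_contra h
    rw [tsum_eq_zero_of_not_summable h] at hsum
    norm_num at hsum
  have hγ0 : 0 ≤ γ := tsum_nonneg fun k => mul_nonneg (Nat.cast_nonneg k) (hq k)
  -- main lemma about g
  have key : ∀ y : ℝ, 0 ≤ y → y ≤ 1 →
      (0 ≤ ∑' k : ℕ, q k * y ^ k) ∧ (∑' k : ℕ, q k * y ^ k) ≤ 1 ∧
      1 - (∑' k : ℕ, q k * y ^ k) ≤ γ * (1 - y) := by
    intro y h0 h1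
    have hterm : ∀ k : ℕ, 0 ≤ q k * y ^ k := fun k => mul_nonneg (hq k) (pow_nonneg h0 k)
    have hle : ∀ k : ℕ, q k * y ^ k ≤ q k := fun k => by
      calc q k * y ^ k ≤ q k * 1 := mul_le_mul_of_nonneg_left (pow_le_one₀ h0 h1) (hq k)
        _ = q k := mul_one _
    have hsg : Summable fun k : ℕ => q k * y ^ k :=
      Summable.of_nonneg_of_le hterm hle hqsum
    refine ⟨tsum_nonneg hterm, ?_, ?_⟩
    · calc (∑' k : ℕ, q k * y ^ k) ≤ ∑' k : ℕ, q k := Summable.tsum_le_tsum hle hsg hqsum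
        _ = 1 := hsum
    · have hdiff : 1 - (∑' k : ℕ, q k * y ^ k) = ∑' k : ℕ, q k * (1 - y ^ k) := by
        have : (∑' k : ℕ, q k * (1 - y ^ k)) = (∑' k : ℕ, q k) - ∑' k : ℕ, q k * y ^ k := by
          rw [← Summable.tsum_sub hqsum hsg]
          congr 1; ext k; ring
        rw [this, hsum]
      rw [hdiff]
      have hbound : ∀ k : ℕ, q k * (1 - y ^ k) ≤ (k : ℝ) * q k * (1 - y) := by
        intro k
        have := one_sub_pow_le_aux h0 h1 k
        have h3 : q k * (1 - y ^ k) ≤ q k * ((k : ℝ) * (1 - y)) :=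
          mul_le_mul_of_nonneg_left this (hq k)
        linarith [h3]
      have hs2 : Summable fun k : ℕ => (k : ℝ) * q k * (1 - y) := hmean.mul_right _
      have hs1 : Summable fun k : ℕ => q k * (1 - y ^ k) :=
        (hqsum.sub hsg).congr (by intro k; ring)
      calc (∑' k : ℕ, q k * (1 - y ^ k)) ≤ ∑' k : ℕ, (k : ℝ) * q k * (1 - y) :=
            Summable.tsum_le_tsum hbound hs1 hs2
        _ = γ * (1 - y) := by rw [tsum_mul_right, hγ, mul_comm]
  intro n
  induction n with
  | zero => simp [hx0]
  | succ n ih =>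
    obtain ⟨⟨h0, h1⟩, hpow⟩ := ih
    obtain ⟨g0, g1, gle⟩ := key (x n) h0 h1
    rw [hxs n] at *
    refine ⟨⟨g0, g1⟩, ?_⟩
    calc 1 - (∑' k : ℕ, q k * x n ^ k) ≤ γ * (1 - x n) := gle
      _ ≤ γ * γ ^ n := mul_le_mul_of_nonneg_left hpow hγ0
      _ = γ ^ (n + 1) := by ring
end

section
/- For every γ ∈ (0,1) and every natural number m ≥ 1, ∑_{k=1}^∞ (1 - (1 - γᵏ)ᵐ) ≤ log(m)/log(1/γ) + 1 + 2/(1 - γ). -/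
set_option maxHeartbeats 800000


/-- For every `γ ∈ (0,1)` and natural number `m ≥ 1`,
`∑_{k=1}^∞ (1 - (1-γᵏ)ᵐ) ≤ log m / log (1/γ) + 1 + 2/(1-γ)` (the sum over `k ≥ 1` is
written via the reindexing `k = j + 1`). -/
theorem stmt15 (γ : ℝ) (hγ : γ ∈ Set.Ioo (0 : ℝ) 1) (m : ℕ) (hm : 1 ≤ m) :
    Summable (fun j : ℕ => 1 - (1 - γ ^ (j + 1)) ^ m) ∧
      ∑' j : ℕ, (1 - (1 - γ ^ (j + 1)) ^ m) ≤
        Real.log m / Real.log (1 / γ) + 1 + 2 / (1 - γ) := by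
  obtain ⟨hγ0, hγ1⟩ := hγ
  have hmpos : (0:ℝ) < m := by exact_mod_cast hm
  have hm1 : (1:ℝ) ≤ m := by exact_mod_cast hm
  have hpow_pos : ∀ k : ℕ, 0 < γ ^ k := fun k => pow_pos hγ0 k
  have hpow_le1 : ∀ k : ℕ, γ ^ k ≤ 1 := fun k => pow_le_one₀ hγ0.le hγ1.le
  have hterm_le : ∀ j : ℕ, 1 - (1 - γ ^ (j+1)) ^ m ≤ (m:ℝ) * γ ^ (j+1) := by
    intro j
    have hb : (-2:ℝ) ≤ -γ^(j+1) := by nlinarith [hpow_le1 (j+1), hpow_pos (j+1)]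
    have h := one_add_mul_le_pow hb m
    have : (1 : ℝ) + (m:ℝ) * (-γ^(j+1)) ≤ (1 - γ^(j+1)) ^ m := by
      simpa [sub_eq_add_neg] using h
    linarith
  have hterm_nonneg : ∀ j : ℕ, 0 ≤ 1 - (1 - γ ^ (j+1)) ^ m := by
    intro j
    have h1 : (1 - γ^(j+1)) ^ m ≤ 1 := by
      apply pow_le_one₀
      · nlinarith [hpow_le1 (j+1)]
      · nlinarith [hpow_pos (j+1)]
    linarith
  have hterm_le1 : ∀ j : ℕ, 1 - (1 - γ ^ (j+1)) ^ m ≤ 1 := by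
    intro j
    have : 0 ≤ (1 - γ^(j+1)) ^ m := pow_nonneg (by nlinarith [hpow_pos (j+1), hpow_le1 (j+1)]) m
    linarith
  have hgeo0 : Summable (fun j : ℕ => γ ^ j) := summable_geometric_of_lt_one hγ0.le hγ1
  have hgeo : Summable (fun j : ℕ => (m:ℝ) * γ ^ (j+1)) := by
    have := hgeo0.mul_left ((m:ℝ) * γ)
    apply this.congr
    intro j
    ring
  have hsum : Summable (fun j : ℕ => 1 - (1 - γ ^ (j + 1)) ^ m) :=
    Summable.of_nonneg_of_le hterm_nonneg hterm_le hgeo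
  refine ⟨hsum, ?_⟩
  set L := Real.log m / Real.log (1/γ) with hL
  have hloginv : 0 < Real.log (1/γ) := Real.log_pos (by rw [lt_div_iff₀ hγ0]; linarith)
  have hlogγ : Real.log (1/γ) = -Real.log γ := by
    rw [one_div, Real.log_inv]
  have hLnn : 0 ≤ L := div_nonneg (Real.log_nonneg hm1) hloginv.le
  set k₀ := ⌈L⌉₊ with hk0
  -- key: m * γ ^ k₀ ≤ 1
  have hkey : (m:ℝ) * γ ^ k₀ ≤ 1 := by
    have hLk : L ≤ (k₀ : ℝ) := Nat.le_ceil L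
    have hmul : Real.log m ≤ (k₀ : ℝ) * Real.log (1/γ) := by
      rw [hL, div_le_iff₀ hloginv] at hLk
      exact hLk
    have hlog : (k₀ : ℝ) * Real.log γ ≤ -Real.log m := by
      rw [hlogγ] at hmul; linarith
    have hγexp : γ ^ k₀ = Real.exp ((k₀ : ℝ) * Real.log γ) := by
      rw [Real.exp_nat_mul, Real.exp_log hγ0]
    have : γ ^ k₀ ≤ Real.exp (-Real.log m) := by
      rw [hγexp]; exact Real.exp_le_exp.mpr hlog
    have hexp : Real.exp (-Real.log m) = ((m:ℝ))⁻¹ := by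
      rw [Real.exp_neg, Real.exp_log hmpos]
    rw [hexp] at this
    calc (m:ℝ) * γ ^ k₀ ≤ (m:ℝ) * ((m:ℝ))⁻¹ := by
          exact mul_le_mul_of_nonneg_left this hmpos.le
      _ = 1 := mul_inv_cancel₀ (ne_of_gt hmpos)
  -- split the sum at k₀
  rw [← Summable.sum_add_tsum_nat_add k₀ hsum]
  have hfin : ∑ j ∈ Finset.range k₀, (1 - (1 - γ ^ (j + 1)) ^ m) ≤ (k₀ : ℝ) := by
    calc ∑ j ∈ Finset.range k₀, (1 - (1 - γ ^ (j + 1)) ^ m)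
        ≤ ∑ j ∈ Finset.range k₀, (1:ℝ) := Finset.sum_le_sum (fun j _ => hterm_le1 j)
      _ = (k₀ : ℝ) := by simp
  have hsum_shift : Summable (fun j : ℕ => 1 - (1 - γ ^ ((j + k₀) + 1)) ^ m) :=
    (summable_nat_add_iff k₀).mpr hsum
  have hgeo_shift : Summable (fun j : ℕ => ((m:ℝ) * γ ^ (k₀ + 1)) * γ ^ j) :=
    hgeo0.mul_left _
  have htail : ∑' j : ℕ, (1 - (1 - γ ^ ((j + k₀) + 1)) ^ m) ≤ 2 / (1 - γ) := by
    have h1 : ∑' j : ℕ, (1 - (1 - γ ^ ((j + k₀) + 1)) ^ m)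
        ≤ ∑' j : ℕ, ((m:ℝ) * γ ^ (k₀ + 1)) * γ ^ j := by
      apply Summable.tsum_le_tsum _ hsum_shift hgeo_shift
      intro j
      calc 1 - (1 - γ ^ ((j + k₀) + 1)) ^ m ≤ (m:ℝ) * γ ^ ((j + k₀) + 1) := hterm_le _
        _ = ((m:ℝ) * γ ^ (k₀ + 1)) * γ ^ j := by ring
    have h2 : ∑' j : ℕ, ((m:ℝ) * γ ^ (k₀ + 1)) * γ ^ j
        = ((m:ℝ) * γ ^ (k₀ + 1)) * (1 - γ)⁻¹ := by
      rw [tsum_mul_left, tsum_geometric_of_lt_one hγ0.le hγ1]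
    have hsm : (m:ℝ) * γ ^ (k₀ + 1) ≤ 2 := by
      have : (m:ℝ) * γ ^ (k₀ + 1) = ((m:ℝ) * γ ^ k₀) * γ := by ring
      nlinarith
    have hpos : (0:ℝ) < (1 - γ)⁻¹ := inv_pos.mpr (by linarith)
    calc ∑' j : ℕ, (1 - (1 - γ ^ ((j + k₀) + 1)) ^ m)
        ≤ ((m:ℝ) * γ ^ (k₀ + 1)) * (1 - γ)⁻¹ := h1.trans_eq h2
      _ ≤ 2 * (1 - γ)⁻¹ := mul_le_mul_of_nonneg_right hsm hpos.le
      _ = 2 / (1 - γ) := by rw [div_eq_mul_inv]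
  have hk0L : (k₀ : ℝ) ≤ L + 1 := (Nat.ceil_lt_add_one hLnn).le
  linarith
end
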